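/- arXiv:1508.01133 — 8 statements merged into one kernel-verified Lean document; each statement's English description precedes it below -/
import Mathlib

section
/- For any group G and any cycle in the directed graph whose vertices are subgroups of G with an arc of weight r from H to K whenever H ⊆ K and [K : H] = r is finite, the product of the weights of all clockwise arcs equals the product of the weights of all counter-clockwise arcs. -/
lemma comm_of_le_relindex {G : Type*} [Group G] {H K : Subgroup G}
    (hle : H ≤ K) (hne : H.relIndex K ≠ 0) : Subgroup.Commensurable H K :=
  ⟨hne, by rw [Subgroup.relIndex, Subgroup.subgroupOf_eq_top.mpr hle]; simp⟩

/-- In the directed graph on subgroups of `G` with an arc of weight `r` from `H`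
to `K` whenever `H ≤ K`, `H ≠ K` and `[K : H] = r` is finite, for any cycle the
product of weights of clockwise arcs equals the product of weights of
counter-clockwise arcs.  The cycle is given by distinct vertices `v i` indexed
by `ZMod n` (`n ≥ 3`); `d i = true` means the edge between `v i` and `v (i+1)`
is a clockwise arc `v i → v (i+1)`, and `d i = false` means it is a
counter-clockwise arc `v (i+1) → v i`; `r i` is its weight. -/
theorem weighted_cycle_product_eq (G : Type*) [Group G] (n : ℕ) [NeZero n] (hn : 3 ≤ n)
    (v : ZMod n → Subgroup G) (hv : Function.Injective v)
    (d : ZMod n → Bool) (r : ZMod n → ℕ)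
    (h : ∀ i : ZMod n,
      if d i then v i ≤ v (i + 1) ∧ (v i).relIndex (v (i + 1)) = r i ∧ r i ≠ 0
      else v (i + 1) ≤ v i ∧ (v (i + 1)).relIndex (v i) = r i ∧ r i ≠ 0) :
    ∏ i ∈ Finset.univ.filter (fun i => d i = true), r i =
      ∏ i ∈ Finset.univ.filter (fun i => d i = false), r i := by
  -- each edge gives commensurability of consecutive vertices
  have hedge : ∀ i : ZMod n, Subgroup.Commensurable (v i) (v (i + 1)) := by
    intro i
    have hi := h i
    by_cases hd : d i = true <;> simp only [hd, Bool.false_eq_true, if_true, if_false] at hi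
    · exact comm_of_le_relindex hi.1 (hi.2.1 ▸ hi.2.2)
    · exact (comm_of_le_relindex hi.1 (hi.2.1 ▸ hi.2.2)).symm
  -- all vertices commensurable with v 0
  have hcomm : ∀ i : ZMod n, Subgroup.Commensurable (v 0) (v i) := by
    have key : ∀ k : ℕ, Subgroup.Commensurable (v 0) (v (k : ZMod n)) := by
      intro k
      induction k with
      | zero => simpa using Subgroup.Commensurable.refl (v 0)
      | succ k ih =>
        push_cast
        exact ih.trans (hedge (k : ZMod n))
    intro i
    obtain ⟨k, rfl⟩ := ZMod.natCast_zmod_surjective i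
    exact key k
  set B : Subgroup G := ⨅ i, v i with hB
  have hBle : ∀ i, B ≤ v i := fun i => iInf_le v i
  have ha : ∀ i : ZMod n, B.relIndex (v i) ≠ 0 := by
    intro i
    apply Subgroup.relIndex_iInf_ne_zero
    intro j
    exact ((hcomm j).symm.trans (hcomm i)).1
  set a : ZMod n → ℕ := fun i => B.relIndex (v i) with haa
  have hstep : ∀ i : ZMod n,
      a i * (if d i then r i else 1) = a (i + 1) * (if d i then 1 else r i) := by
    intro i
    have hi := h i
    by_cases hd : d i = true <;>
      simp only [hd, Bool.false_eq_true, if_true, if_false, mul_one, one_mul] at hi ⊢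
    · rw [← hi.2.1]
      exact Subgroup.relIndex_mul_relIndex B (v i) (v (i+1)) (hBle _) hi.1
    · rw [← hi.2.1]
      exact (Subgroup.relIndex_mul_relIndex B (v (i+1)) (v i) (hBle _) hi.1).symm
  have hprod : (∏ i, a i) * ∏ i ∈ Finset.univ.filter (fun i => d i = true), r i =
      (∏ i, a i) * ∏ i ∈ Finset.univ.filter (fun i => d i = false), r i := by
    have h1 : ∏ i : ZMod n, (a i * (if d i then r i else 1)) =
        ∏ i : ZMod n, (a (i + 1) * (if d i then 1 else r i)) :=
      Finset.prod_congr rfl fun i _ => hstep i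
    rw [Finset.prod_mul_distrib, Finset.prod_mul_distrib] at h1
    have h2 : ∏ i : ZMod n, a (i + 1) = ∏ i : ZMod n, a i :=
      Fintype.prod_equiv (Equiv.addRight (1 : ZMod n)) _ _ fun i => rfl
    rw [h2] at h1
    calc (∏ i, a i) * ∏ i ∈ Finset.univ.filter (fun i => d i = true), r i
        = (∏ i, a i) * ∏ i : ZMod n, (if d i then r i else 1) := by
          rw [Finset.prod_filter]
      _ = (∏ i, a i) * ∏ i : ZMod n, (if d i then 1 else r i) := h1
      _ = (∏ i, a i) * ∏ i ∈ Finset.univ.filter (fun i => d i = false), r i := by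
          rw [Finset.prod_filter]
          congr 1
          refine Finset.prod_congr rfl fun i _ => ?_
          by_cases hd : d i = true <;> simp [hd]
  have hane : (∏ i, a i) ≠ 0 := Finset.prod_ne_zero_iff.mpr fun i _ => ha i
  exact Nat.eq_of_mul_eq_mul_left (Nat.pos_of_ne_zero hane) hprod
end

section
/- If n = p₁^{n₁} ⋯ p_s^{n_s} with p₁,…,p_s distinct primes, then the prime index graph Π(ℤ_n) is isomorphic to the Cartesian product of paths P_{n₁+1} □ ⋯ □ P_{n_s+1}. -/
open AddSubgroup

section zmodClassify
variable {n : ℕ} [NeZero n]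

lemma zmult_card {g : ℕ} (hg : g ∣ n) :
    Nat.card (zmultiples ((g : ℕ) : ZMod n)) = n / g := by
  rw [Nat.card_zmultiples, ZMod.addOrderOf_coe g (NeZero.ne n), Nat.gcd_eq_right hg]

lemma zmult_mem_of_dvd {g g' : ℕ} (h : g' ∣ g) :
    ((g : ℕ) : ZMod n) ∈ zmultiples ((g' : ℕ) : ZMod n) := by
  obtain ⟨c, rfl⟩ := h
  rw [mem_zmultiples_iff]
  refine ⟨(c : ℤ), ?_⟩
  rw [zsmul_eq_mul]
  push_cast
  ring

lemma exists_dvd_zmultiples (H : AddSubgroup (ZMod n)) :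
    ∃ g : ℕ, g ∣ n ∧ H = zmultiples ((g : ℕ) : ZMod n) := by
  obtain ⟨x, hx⟩ := (inferInstance : IsAddCyclic H).exists_generator
  have hH : H = zmultiples (x : ZMod n) := by
    apply le_antisymm
    · intro y hy
      obtain ⟨m, hm⟩ := hx ⟨y, hy⟩
      exact ⟨m, by simpa using congrArg Subtype.val hm⟩
    · rw [zmultiples_le]
      exact x.2
  set v := (x : ZMod n).val with hv
  have hvx : ((v : ℕ) : ZMod n) = (x : ZMod n) := ZMod.natCast_rightInverse _
  refine ⟨Nat.gcd n v, Nat.gcd_dvd_left n v, ?_⟩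
  rw [hH]
  apply le_antisymm
  · rw [zmultiples_le]
    have := zmult_mem_of_dvd (n := n) (g := v) (g' := Nat.gcd n v) (Nat.gcd_dvd_right n v)
    rwa [hvx] at this
  · rw [zmultiples_le]
    rw [mem_zmultiples_iff]
    refine ⟨Int.gcdB n v, ?_⟩
    have h1 := Int.gcd_eq_gcd_ab (n : ℤ) (v : ℤ)
    have h2 := congrArg (fun z : ℤ => (z : ZMod n)) h1
    simp only [Int.gcd_natCast_natCast] at h2
    push_cast at h2
    rw [ZMod.natCast_self, hvx] at h2
    rw [zsmul_eq_mul, mul_comm]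
    rw [h2]
    ring

lemma zmult_le_iff {g g' : ℕ} (hg : g ∣ n) (hg' : g' ∣ n) :
    zmultiples ((g : ℕ) : ZMod n) ≤ zmultiples ((g' : ℕ) : ZMod n) ↔ g' ∣ g := by
  constructor
  · intro h
    have hcard := AddSubgroup.card_dvd_of_le h
    rw [zmult_card hg, zmult_card hg'] at hcard
    have hg0 : 0 < n / g := Nat.div_pos (Nat.le_of_dvd (Nat.pos_of_ne_zero (NeZero.ne n)) hg)
      (Nat.pos_of_ne_zero (fun h0 => NeZero.ne n (by simp [h0] at hg; exact hg)))
    have h2 : g' * (n / g) ∣ g * (n / g) := by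
      calc g' * (n / g) ∣ g' * (n / g') := Nat.mul_dvd_mul_left _ hcard
        _ = n := Nat.mul_div_cancel' hg'
        _ = g * (n / g) := (Nat.mul_div_cancel' hg).symm
    exact (Nat.mul_dvd_mul_iff_right hg0).mp h2
  · intro h
    rw [zmultiples_le]
    exact zmult_mem_of_dvd h

lemma zmult_inj {g g' : ℕ} (hg : g ∣ n) (hg' : g' ∣ n)
    (h : zmultiples ((g : ℕ) : ZMod n) = zmultiples ((g' : ℕ) : ZMod n)) : g = g' := by
  have hc : n / g = n / g' := by
    rw [← zmult_card (n := n) hg, ← zmult_card (n := n) hg', h]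
  have hn0 := NeZero.ne n
  calc g = n / (n / g) := (Nat.div_div_self hg hn0).symm
    _ = n / (n / g') := by rw [hc]
    _ = g' := Nat.div_div_self hg' hn0

end zmodClassify

section numtheory
variable {s : ℕ} {p : Fin s → ℕ} (hp : ∀ i, (p i).Prime) (hinj : Function.Injective p)
include hp hinj

lemma fact_prod_pow (c : Fin s → ℕ) (j : Fin s) :
    (∏ i, p i ^ c i).factorization (p j) = c j := by
  rw [Nat.factorization_prod (fun i _ => pow_ne_zero _ (hp i).pos.ne')]
  simp only [fun i : Fin s => Nat.Prime.factorization_pow (hp i)]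
  rw [Finsupp.finset_sum_apply]
  rw [Finset.sum_eq_single j]
  · simp
  · intro i _ hij
    simp only [Finsupp.single_apply]
    exact if_neg fun h => hij (hinj h)
  · simp

lemma fact_prod_pow_notmem (c : Fin s → ℕ) (q : ℕ) (hq : ∀ i, q ≠ p i) :
    (∏ i, p i ^ c i).factorization q = 0 := by
  rw [Nat.factorization_prod (fun i _ => pow_ne_zero _ (hp i).pos.ne')]
  simp only [fun i : Fin s => Nat.Prime.factorization_pow (hp i)]
  rw [Finsupp.finset_sum_apply]
  refine Finset.sum_eq_zero fun i _ => ?_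
  simp only [Finsupp.single_apply]
  exact if_neg fun h => hq i h.symm

omit hinj in
lemma prod_pow_ne_zero (c : Fin s → ℕ) : (∏ i, p i ^ c i) ≠ 0 :=
  Finset.prod_ne_zero_iff.mpr fun i _ => pow_ne_zero _ (hp i).pos.ne'

lemma prod_pow_dvd_iff {a b : Fin s → ℕ} :
    (∏ i, p i ^ a i) ∣ (∏ i, p i ^ b i) ↔ ∀ i, a i ≤ b i := by
  constructor
  · intro h i
    have hle := (Nat.factorization_le_iff_dvd (prod_pow_ne_zero hp (c := a))
      (prod_pow_ne_zero hp (c := b))).mpr h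
    have := hle (p i)
    rwa [fact_prod_pow hp hinj, fact_prod_pow hp hinj] at this
  · intro h
    exact Finset.prod_dvd_prod_of_dvd _ _ fun i _ => pow_dvd_pow _ (h i)

lemma prime_prod_pow_iff (c : Fin s → ℕ) :
    (∏ i, p i ^ c i).Prime ↔ ∃ i, c i = 1 ∧ ∀ j, j ≠ i → c j = 0 := by
  constructor
  · intro hq
    obtain ⟨i, -, hdvd⟩ := hq.prime.exists_mem_finset_dvd (dvd_refl _)
    have hqi : (∏ i, p i ^ c i) = p i :=
      ((Nat.prime_dvd_prime_iff_eq hq (hp i)).mp (hq.dvd_of_dvd_pow hdvd))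
    refine ⟨i, ?_, fun j hj => ?_⟩
    · have := fact_prod_pow hp hinj c i
      rw [hqi, (hp i).factorization] at this
      simpa using this.symm
    · have := fact_prod_pow hp hinj c j
      rw [hqi, (hp i).factorization, Finsupp.single_apply] at this
      rw [← this, if_neg (fun h => hj (hinj h.symm))]
  · rintro ⟨i, hi1, hi0⟩
    have : (∏ j, p j ^ c j) = p i := by
      rw [Finset.prod_eq_single i (fun j _ hj => by rw [hi0 j hj, pow_zero])
        (fun h => absurd (Finset.mem_univ i) h), hi1, pow_one]
    rw [this]
    exact hp i

lemma exists_tuple_of_dvd {k : Fin s → ℕ} {d : ℕ} (hd : d ∣ ∏ i, p i ^ k i) :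
    ∃ a : ∀ i, Fin (k i + 1), (∏ i, p i ^ ((a i : ℕ))) = d := by
  have hn0 : (∏ i, p i ^ k i) ≠ 0 := prod_pow_ne_zero hp (c := k)
  have hd0 : d ≠ 0 := fun h => hn0 (Nat.eq_zero_of_zero_dvd (h ▸ hd))
  have hle := (Nat.factorization_le_iff_dvd hd0 hn0).mpr hd
  have hbound : ∀ i, d.factorization (p i) < k i + 1 := by
    intro i
    have := hle (p i)
    rw [fact_prod_pow hp hinj] at this
    omega
  refine ⟨fun i => ⟨d.factorization (p i), hbound i⟩, ?_⟩
  refine Nat.eq_of_factorization_eq (prod_pow_ne_zero hp (c := _)) hd0 fun q => ?_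
  by_cases hq : ∃ i, q = p i
  · obtain ⟨i, rfl⟩ := hq
    rw [fact_prod_pow hp hinj]
  · push_neg at hq
    rw [fact_prod_pow_notmem hp hinj _ q hq]
    have h2 := hle q
    rw [fact_prod_pow_notmem hp hinj _ q hq] at h2
    omega

end numtheory

lemma relindex_mul_card' {G : Type*} [Group G] {H K : Subgroup G} (h : H ≤ K) :
    H.relIndex K * Nat.card H = Nat.card K := by
  have := Subgroup.index_mul_card (H.subgroupOf K)
  rwa [Nat.card_congr (Subgroup.subgroupOfEquivOfLe h).toEquiv] at this


/-- The prime index graph of a group: vertices are subgroups, two distinct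
subgroups are adjacent iff one is contained in the other with prime index. -/
def primeIndexGraph (G : Type*) [Group G] : SimpleGraph (Subgroup G) :=
  SimpleGraph.fromRel (fun H K => H ≤ K ∧ (H.relIndex K).Prime)

/-- The Cartesian (box) product of a finite family of graphs: two tuples are
adjacent iff they differ in exactly one coordinate, in which they are adjacent. -/
def boxProdPi {ι : Type*} {α : ι → Type*} (Γ : ∀ i, SimpleGraph (α i)) :
    SimpleGraph (∀ i, α i) where
  Adj a b := ∃ i, (Γ i).Adj (a i) (b i) ∧ ∀ j, j ≠ i → a j = b j
  symm := by
    constructor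
    rintro a b ⟨i, hadj, heq⟩
    exact ⟨i, hadj.symm, fun j hj => (heq j hj).symm⟩
  loopless := by
    constructor
    rintro a ⟨i, hadj, -⟩
    exact (Γ i).loopless.irrefl _ hadj

theorem primeIndexGraph_zmod (s : ℕ) (p k : Fin s → ℕ)
    (hp : ∀ i, (p i).Prime) (hinj : Function.Injective p) (hk : ∀ i, 1 ≤ k i)
    (n : ℕ) (hn : n = ∏ i, p i ^ k i) :
    Nonempty (primeIndexGraph (Multiplicative (ZMod n)) ≃g
      boxProdPi (fun i => SimpleGraph.pathGraph (k i + 1))) := by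
  haveI : NeZero n := ⟨by rw [hn]; exact prod_pow_ne_zero hp (c := k)⟩
  set m : (∀ i, Fin (k i + 1)) → ℕ := fun a => ∏ i, p i ^ ((a i : ℕ)) with hm
  have hmdvd : ∀ a, m a ∣ n := by
    intro a
    rw [hn]
    exact Finset.prod_dvd_prod_of_dvd _ _ fun i _ => pow_dvd_pow _ (Nat.lt_succ_iff.mp (a i).isLt)
  set E : ℕ → Subgroup (Multiplicative (ZMod n)) :=
    fun g => AddSubgroup.toSubgroup (zmultiples ((g : ℕ) : ZMod n)) with hE
  set V : (∀ i, Fin (k i + 1)) → Subgroup (Multiplicative (ZMod n)) := fun a => E (m a) with hV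
  -- basic facts about E
  have hEcard : ∀ g : ℕ, g ∣ n → Nat.card (E g) = n / g := by
    intro g hg
    have : Nat.card (E g) = Nat.card (zmultiples ((g : ℕ) : ZMod n)) := rfl
    rw [this, zmult_card hg]
  have hEle : ∀ g g' : ℕ, g ∣ n → g' ∣ n → (E g ≤ E g' ↔ g' ∣ g) := fun g g' hg hg' =>
    (AddSubgroup.toSubgroup.le_iff_le).trans (zmult_le_iff hg hg')
  have hEinj : ∀ g g' : ℕ, g ∣ n → g' ∣ n → E g = E g' → g = g' := by
    intro g g' hg hg' h
    exact zmult_inj hg hg' (AddSubgroup.toSubgroup.injective h)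
  have hErel : ∀ g g' : ℕ, g ∣ n → g' ∣ g → (E g).relIndex (E g') = g / g' := by
    intro g g' hg hg'
    have hle : E g ≤ E g' := (hEle g g' hg (hg'.trans hg)).mpr hg'
    have h1 := relindex_mul_card' hle
    rw [hEcard g hg, hEcard g' (hg'.trans hg)] at h1
    obtain ⟨c, rfl⟩ := hg'
    obtain ⟨t, rfl⟩ := hg
    have hn0 := NeZero.ne (g' * c * t)
    have hg'0 : 0 < g' := Nat.pos_of_ne_zero (by rintro rfl; simp at hn0)
    have hc0 : 0 < c := Nat.pos_of_ne_zero (by rintro rfl; simp at hn0)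
    have ht0 : 0 < t := Nat.pos_of_ne_zero (by rintro rfl; simp at hn0)
    have e1 : g' * c / g' = c := Nat.mul_div_cancel_left c hg'0
    have e2 : g' * c * t / (g' * c) = t := Nat.mul_div_cancel_left t (Nat.mul_pos hg'0 hc0)
    have e3 : g' * c * t / g' = c * t := by
      rw [mul_assoc]
      exact Nat.mul_div_cancel_left (c * t) hg'0
    rw [e2, e3] at h1
    rw [e1]
    exact Nat.eq_of_mul_eq_mul_right ht0 h1
  -- injectivity of m and V
  have hminj : ∀ a b, m a = m b → a = b := by
    intro a b h
    have h1 := (prod_pow_dvd_iff hp hinj (a := fun i => ((a i : ℕ))) (b := fun i => ((b i : ℕ)))).mp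
      (dvd_of_eq h)
    have h2 := (prod_pow_dvd_iff hp hinj (a := fun i => ((b i : ℕ))) (b := fun i => ((a i : ℕ)))).mp
      (dvd_of_eq h.symm)
    funext i
    exact Fin.ext (le_antisymm (h1 i) (h2 i))
  have hVinj : Function.Injective V := by
    intro a b h
    exact hminj a b (hEinj _ _ (hmdvd a) (hmdvd b) h)
  have hVsurj : Function.Surjective V := by
    intro K
    obtain ⟨g, hgn, hK⟩ := exists_dvd_zmultiples (AddSubgroup.toSubgroup.symm K)
    obtain ⟨a, ha⟩ := exists_tuple_of_dvd hp hinj (hn ▸ hgn)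
    refine ⟨a, ?_⟩
    have : m a = g := ha
    rw [hV]
    simp only [this, hE]
    rw [← hK]
    exact AddSubgroup.toSubgroup.apply_symm_apply K
  -- the quotient computation
  have hsub : ∀ a b : ∀ i, Fin (k i + 1), (∀ i, (a i : ℕ) ≤ (b i : ℕ)) →
      m b / m a = ∏ i, p i ^ ((b i : ℕ) - (a i : ℕ)) := by
    intro a b hle
    have h1 : m a * ∏ i, p i ^ ((b i : ℕ) - (a i : ℕ)) = m b := by
      rw [hm]
      simp only
      rw [← Finset.prod_mul_distrib]
      exact Finset.prod_congr rfl fun i _ => by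
        rw [← pow_add, Nat.add_sub_cancel' (hle i)]
    rw [← h1, Nat.mul_div_cancel_left _ (Nat.pos_of_ne_zero (prod_pow_ne_zero hp (c := _)))]
  have hbridge : ∀ a b : ∀ i, Fin (k i + 1),
      (m a ∣ m b ∧ (m b / m a).Prime) ↔
        ∃ i, ((a i : ℕ) + 1 = (b i : ℕ)) ∧ ∀ j, j ≠ i → a j = b j := by
    intro a b
    constructor
    · rintro ⟨hdvd, hprime⟩
      have hle : ∀ i, (a i : ℕ) ≤ (b i : ℕ) := (prod_pow_dvd_iff hp hinj).mp hdvd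
      rw [hsub a b hle] at hprime
      obtain ⟨i, hi1, hi0⟩ := (prime_prod_pow_iff hp hinj _).mp hprime
      refine ⟨i, ?_, fun j hj => ?_⟩
      · have := hle i
        omega
      · have h1 := hi0 j hj
        have h2 := hle j
        exact Fin.ext (by omega)
    · rintro ⟨i, hi1, hi0⟩
      have hle : ∀ j, (a j : ℕ) ≤ (b j : ℕ) := by
        intro j
        by_cases hj : j = i
        · subst hj; omega
        · rw [hi0 j hj]
      refine ⟨(prod_pow_dvd_iff hp hinj).mpr hle, ?_⟩
      rw [hsub a b hle]
      refine (prime_prod_pow_iff hp hinj _).mpr ⟨i, by omega, fun j hj => ?_⟩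
      rw [hi0 j hj]
      omega
  have hrelP : ∀ a b, (V a ≤ V b ∧ ((V a).relIndex (V b)).Prime) ↔
      (m b ∣ m a ∧ (m a / m b).Prime) := by
    intro a b
    constructor
    · rintro ⟨h1, h2⟩
      have hd := (hEle _ _ (hmdvd a) (hmdvd b)).mp h1
      refine ⟨hd, ?_⟩
      have h2' : ((E (m a)).relIndex (E (m b))).Prime := h2
      rwa [hErel (m a) (m b) (hmdvd a) hd] at h2'
    · rintro ⟨hd, hpr⟩
      refine ⟨(hEle _ _ (hmdvd a) (hmdvd b)).mpr hd, ?_⟩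
      show ((E (m a)).relIndex (E (m b))).Prime
      rw [hErel (m a) (m b) (hmdvd a) hd]
      exact hpr
  refine ⟨SimpleGraph.Iso.symm ⟨Equiv.ofBijective V ⟨hVinj, hVsurj⟩, ?_⟩⟩
  intro a b
  show (primeIndexGraph _).Adj (V a) (V b) ↔ (boxProdPi _).Adj a b
  rw [primeIndexGraph, SimpleGraph.fromRel_adj]
  constructor
  · rintro ⟨hne, h | h⟩
    · obtain ⟨i, h1, h2⟩ := (hbridge b a).mp ((hrelP a b).mp h)
      exact ⟨i, SimpleGraph.pathGraph_adj.mpr (Or.inr h1), fun j hj => (h2 j hj).symm⟩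
    · obtain ⟨i, h1, h2⟩ := (hbridge a b).mp ((hrelP b a).mp h)
      exact ⟨i, SimpleGraph.pathGraph_adj.mpr (Or.inl h1), h2⟩
  · rintro ⟨i, hadj, heq⟩
    rcases SimpleGraph.pathGraph_adj.mp hadj with h1 | h1
    · refine ⟨?_, Or.inr ((hrelP b a).mpr ((hbridge a b).mpr ⟨i, h1, heq⟩))⟩
      intro hVe
      have hab := hVinj hVe
      rw [hab] at h1
      omega
    · refine ⟨?_, Or.inl ((hrelP a b).mpr ((hbridge b a).mpr
        ⟨i, h1, fun j hj => (heq j hj).symm⟩))⟩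
      intro hVe
      have hab := hVinj hVe
      rw [hab] at h1
      omega
end

section
/- Let G be a finite group. If the prime index graph Π(G) is 2-regular, then G ≅ ℤ_{pq} for distinct primes p and q, and Π(G) is a 4-cycle. -/
section Aux
variable {G : Type*} [Group G]

lemma aux_card_mul_relindex {H K : Subgroup G} (h : H ≤ K) :
    Nat.card H * H.relIndex K = Nat.card K := by
  rw [← Subgroup.relIndex_bot_left H, ← Subgroup.relIndex_bot_left K,
    Subgroup.relIndex_mul_relIndex (H := ⊥) (K := H) (L := K) bot_le h]

lemma aux_adj_of_le_prime {H K : Subgroup G} (hle : H ≤ K) (hp : (H.relIndex K).Prime) :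
    (primeIndexGraph G).Adj H K := by
  rw [primeIndexGraph, SimpleGraph.fromRel_adj]
  refine ⟨fun e => ?_, Or.inl ⟨hle, hp⟩⟩
  subst e; rw [Subgroup.relIndex_self] at hp; exact hp.one_lt.ne' rfl

lemma aux_adj_bot_iff {K : Subgroup G} :
    (primeIndexGraph G).Adj ⊥ K ↔ (Nat.card K).Prime := by
  constructor
  · rw [primeIndexGraph, SimpleGraph.fromRel_adj]
    rintro ⟨hne, ⟨-, hp⟩ | ⟨hle, -⟩⟩
    · rwa [Subgroup.relIndex_bot_left] at hp
    · exact absurd (le_bot_iff.mp hle).symm hne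
  · intro hp
    exact aux_adj_of_le_prime bot_le (by rwa [Subgroup.relIndex_bot_left])

lemma aux_eq_of_le_of_card_le {H K : Subgroup G} [Finite G] (hle : H ≤ K)
    (hc : Nat.card K ≤ Nat.card H) : H = K := by
  have h1 := aux_card_mul_relindex hle
  have hpos : 0 < Nat.card H := Nat.card_pos
  have hr0 : H.relIndex K ≠ 0 := by
    intro h0; rw [h0, mul_zero] at h1; exact (Nat.card_pos (α := K)).ne h1
  have hr1 : H.relIndex K ≤ 1 := Nat.le_of_mul_le_mul_left (by rw [mul_one, h1]; exact hc) hpos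
  have : H.relIndex K = 1 := le_antisymm hr1 (Nat.one_le_iff_ne_zero.mpr hr0)
  exact le_antisymm hle (Subgroup.relIndex_eq_one.mp this)

lemma aux_exists_orderOf_eq_card {K : Subgroup G} (hK : (Nat.card K).Prime) :
    ∃ a : G, a ∈ K ∧ orderOf a = Nat.card K := by
  have : Finite K := Nat.finite_of_card_ne_zero hK.pos.ne'
  have : Nontrivial K := Finite.one_lt_card_iff_nontrivial.mp hK.one_lt
  obtain ⟨a, ha⟩ := exists_ne (1 : K)
  refine ⟨a, a.2, ?_⟩
  have hd : orderOf (a : G) ∣ Nat.card K := by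
    rw [Subgroup.orderOf_coe]; exact orderOf_dvd_natCard a
  rcases hK.eq_one_or_self_of_dvd _ hd with h1 | h
  · exact absurd (by exact_mod_cast orderOf_eq_one_iff.mp h1 : (a : K) = 1) ha
  · exact h

lemma aux_not_three_neighbors {V : Type*} (G' : SimpleGraph V) {v x y z : V}
    (h2 : (G'.neighborSet v).ncard = 2)
    (hx : G'.Adj v x) (hy : G'.Adj v y) (hz : G'.Adj v z)
    (hxy : x ≠ y) (hxz : x ≠ z) (hyz : y ≠ z) : False := by
  obtain ⟨A, B, hAB, hset⟩ := Set.ncard_eq_two.mp h2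
  have hx' : x ∈ ({A, B} : Set V) := hset ▸ hx
  have hy' : y ∈ ({A, B} : Set V) := hset ▸ hy
  have hz' : z ∈ ({A, B} : Set V) := hset ▸ hz
  simp only [Set.mem_insert_iff, Set.mem_singleton_iff] at hx' hy' hz'
  rcases hx' with rfl | rfl <;> rcases hy' with rfl | rfl <;> rcases hz' with rfl | rfl <;>
    simp_all

end Aux

open scoped commutatorElement

theorem primeIndexGraph_two_regular (G : Type*) [Group G] [Fintype G]
    (h : ∀ H : Subgroup G, ((primeIndexGraph G).neighborSet H).ncard = 2) :
    ∃ p q : ℕ, p.Prime ∧ q.Prime ∧ p ≠ q ∧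
      Nonempty (G ≃* Multiplicative (ZMod (p * q))) ∧
      Nonempty (primeIndexGraph G ≃g SimpleGraph.cycleGraph 4) := by
  classical
  obtain ⟨K₁, K₂, hK12, hbot⟩ := Set.ncard_eq_two.mp (h ⊥)
  have hmemK₁ : K₁ ∈ (primeIndexGraph G).neighborSet ⊥ := by
    rw [hbot]; exact Set.mem_insert _ _
  have hmemK₂ : K₂ ∈ (primeIndexGraph G).neighborSet ⊥ := by
    rw [hbot]; exact Set.mem_insert_of_mem _ rfl
  have h1 : (Nat.card K₁).Prime := aux_adj_bot_iff.mp hmemK₁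
  have h2 : (Nat.card K₂).Prime := aux_adj_bot_iff.mp hmemK₂
  set p := Nat.card K₁ with hp_def
  set q := Nat.card K₂ with hq_def
  have hcard_ne : ∀ {X Y : Subgroup G}, Nat.card X ≠ Nat.card Y → X ≠ Y :=
    fun hne e => hne (by rw [e])
  have hmem : ∀ L : Subgroup G, (Nat.card L).Prime → L = K₁ ∨ L = K₂ := by
    intro L hL
    have : L ∈ (primeIndexGraph G).neighborSet ⊥ := aux_adj_bot_iff.mpr hL
    rw [hbot] at this
    simpa using this
  have hconjcard : ∀ (g : G) (K : Subgroup G),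
      Nat.card (K.map (MulAut.conj g).toMonoidHom) = Nat.card K :=
    fun g K => (Nat.card_congr
      (K.equivMapOfInjective _ (MulAut.conj g).injective).toEquiv).symm
  have hselfconj : ∀ (K : Subgroup G), ∀ g ∈ K, K.map (MulAut.conj g).toMonoidHom = K := by
    intro K g hg
    apply le_antisymm
    · rintro x ⟨y, hy, rfl⟩
      exact K.mul_mem (K.mul_mem hg hy) (K.inv_mem hg)
    · intro x hx
      refine ⟨g⁻¹ * x * g, K.mul_mem (K.mul_mem (K.inv_mem hg) hx) hg, ?_⟩
      simp [MulAut.conj]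
      group
  obtain ⟨a, haK, ha⟩ := aux_exists_orderOf_eq_card h1
  obtain ⟨b, hbK, hb⟩ := aux_exists_orderOf_eq_card h2
  rw [← hp_def] at ha
  rw [← hq_def] at hb
  have ha1 : a ≠ 1 := by
    intro e; rw [e, orderOf_one] at ha; exact h1.one_lt.ne ha
  have hb1 : b ≠ 1 := by
    intro e; rw [e, orderOf_one] at hb; exact h2.one_lt.ne hb
  have hpq : p ≠ q := by
    intro hpqe
    have hinf : K₁ ⊓ K₂ = ⊥ := by
      have hd : Nat.card (K₁ ⊓ K₂ : Subgroup G) ∣ p := Subgroup.card_dvd_of_le inf_le_left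
      rcases h1.eq_one_or_self_of_dvd _ hd with hc1 | hcp
      · exact Subgroup.card_eq_one.mp hc1
      · exfalso
        have heq : K₁ ⊓ K₂ = K₁ := aux_eq_of_le_of_card_le inf_le_left (le_of_eq hcp.symm)
        have hle : K₁ ≤ K₂ := heq ▸ inf_le_right
        exact hK12 (aux_eq_of_le_of_card_le hle (le_of_eq hpqe.symm))
    have hstab : ∀ g ∈ K₁, ∀ x ∈ K₂, g * x * g⁻¹ ∈ K₂ := by
      intro g hg x hx
      have hcard : (Nat.card (K₂.map (MulAut.conj g).toMonoidHom)).Prime := by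
        rw [hconjcard]; exact h2
      rcases hmem _ hcard with e | e
      · exfalso
        have hsc := hselfconj K₁ g hg
        exact hK12 (Subgroup.map_injective (MulAut.conj g).injective (hsc.trans e.symm))
      · have : g * x * g⁻¹ ∈ K₂.map (MulAut.conj g).toMonoidHom := ⟨x, hx, rfl⟩
        rwa [e] at this
    have hstab' : ∀ g ∈ K₂, ∀ x ∈ K₁, g * x * g⁻¹ ∈ K₁ := by
      intro g hg x hx
      have hcard : (Nat.card (K₁.map (MulAut.conj g).toMonoidHom)).Prime := by
        rw [hconjcard]; exact h1
      rcases hmem _ hcard with e | e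
      · have : g * x * g⁻¹ ∈ K₁.map (MulAut.conj g).toMonoidHom := ⟨x, hx, rfl⟩
        rwa [e] at this
      · exfalso
        have hsc := hselfconj K₂ g hg
        exact hK12 (Subgroup.map_injective (MulAut.conj g).injective (e.trans hsc.symm))
    have hcomm : Commute a b := by
      rw [← commutatorElement_eq_one_iff_commute]
      have hmem2 : ⁅a, b⁆ ∈ K₂ := by
        rw [commutatorElement_def]
        exact K₂.mul_mem (hstab a haK b hbK) (K₂.inv_mem hbK)
      have hmem1 : ⁅a, b⁆ ∈ K₁ := by
        have hx : a * (b * a⁻¹ * b⁻¹) ∈ K₁ :=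
          K₁.mul_mem haK (hstab' b hbK a⁻¹ (K₁.inv_mem haK))
        rw [commutatorElement_def]
        convert hx using 1
        group
      have hib : ⁅a, b⁆ ∈ K₁ ⊓ K₂ := ⟨hmem1, hmem2⟩
      rwa [hinf, Subgroup.mem_bot] at hib
    have hne : a * b ≠ 1 := by
      intro e'
      have hbmem : b ∈ K₁ ⊓ K₂ := by
        refine ⟨?_, hbK⟩
        have hba : b = a⁻¹ := eq_inv_of_mul_eq_one_right e'
        rw [hba]; exact K₁.inv_mem haK
      rw [hinf, Subgroup.mem_bot] at hbmem
      exact hb1 hbmem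
    have habo : orderOf (a * b) = p := by
      have hdvd : orderOf (a * b) ∣ p := by
        apply orderOf_dvd_of_pow_eq_one
        rw [hcomm.mul_pow]
        have e1 : a ^ p = 1 := by rw [← ha]; exact pow_orderOf_eq_one a
        have e2 : b ^ p = 1 := by rw [hpqe, ← hb]; exact pow_orderOf_eq_one b
        rw [e1, e2, one_mul]
      rcases h1.eq_one_or_self_of_dvd _ hdvd with e | e
      · exact absurd (orderOf_eq_one_iff.mp e) hne
      · exact e
    have hzp : (Nat.card (Subgroup.zpowers (a * b))).Prime := by
      rw [Nat.card_zpowers, habo]; exact h1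
    rcases hmem _ hzp with e | e
    · have hab : a * b ∈ K₁ := e ▸ Subgroup.mem_zpowers _
      have hbm : b ∈ K₁ ⊓ K₂ := by
        refine ⟨?_, hbK⟩
        have := K₁.mul_mem (K₁.inv_mem haK) hab
        rwa [inv_mul_cancel_left] at this
      rw [hinf, Subgroup.mem_bot] at hbm
      exact hb1 hbm
    · have hab : a * b ∈ K₂ := e ▸ Subgroup.mem_zpowers _
      have ham : a ∈ K₁ ⊓ K₂ := by
        refine ⟨haK, ?_⟩
        have := K₂.mul_mem hab (K₂.inv_mem hbK)
        rwa [mul_inv_cancel_right] at this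
      rw [hinf, Subgroup.mem_bot] at ham
      exact ha1 ham
  have hcop : Nat.Coprime p q := (Nat.coprime_primes h1 h2).mpr hpq
  have hinf : K₁ ⊓ K₂ = ⊥ := Subgroup.inf_eq_bot_of_coprime hcop
  have hnorm₁ : ∀ g : G, K₁.map (MulAut.conj g).toMonoidHom = K₁ := by
    intro g
    rcases hmem _ (show (Nat.card (K₁.map (MulAut.conj g).toMonoidHom)).Prime by
      rw [hconjcard]; exact h1) with e | e
    · exact e
    · exfalso; apply hpq
      rw [hp_def, hq_def, ← e, hconjcard]
  have hnorm₂ : ∀ g : G, K₂.map (MulAut.conj g).toMonoidHom = K₂ := by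
    intro g
    rcases hmem _ (show (Nat.card (K₂.map (MulAut.conj g).toMonoidHom)).Prime by
      rw [hconjcard]; exact h2) with e | e
    · exfalso; apply hpq
      rw [hp_def, hq_def, ← e, hconjcard]
    · exact e
  have hstab₁ : ∀ (g : G), ∀ x ∈ K₁, g * x * g⁻¹ ∈ K₁ := by
    intro g x hx
    have : g * x * g⁻¹ ∈ K₁.map (MulAut.conj g).toMonoidHom := ⟨x, hx, rfl⟩
    rwa [hnorm₁ g] at this
  have hstab₂ : ∀ (g : G), ∀ x ∈ K₂, g * x * g⁻¹ ∈ K₂ := by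
    intro g x hx
    have : g * x * g⁻¹ ∈ K₂.map (MulAut.conj g).toMonoidHom := ⟨x, hx, rfl⟩
    rwa [hnorm₂ g] at this
  have hcomm : Commute a b := by
    rw [← commutatorElement_eq_one_iff_commute]
    have hmem2 : ⁅a, b⁆ ∈ K₂ := by
      rw [commutatorElement_def]
      exact K₂.mul_mem (hstab₂ a b hbK) (K₂.inv_mem hbK)
    have hmem1 : ⁅a, b⁆ ∈ K₁ := by
      have hx : a * (b * a⁻¹ * b⁻¹) ∈ K₁ :=
        K₁.mul_mem haK (hstab₁ b a⁻¹ (K₁.inv_mem haK))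
      rw [commutatorElement_def]
      convert hx using 1
      group
    have hib : ⁅a, b⁆ ∈ K₁ ⊓ K₂ := ⟨hmem1, hmem2⟩
    rwa [hinf, Subgroup.mem_bot] at hib
  set c := a * b with hc_def
  have hc : orderOf c = p * q := by
    rw [hc_def, hcomm.orderOf_mul_eq_mul_orderOf_of_coprime (by rw [ha, hb]; exact hcop),
      ha, hb]
  set R := Subgroup.zpowers c with hR_def
  have hRcard : Nat.card R = p * q := by rw [hR_def, Nat.card_zpowers, hc]
  have haR : a ∈ R := by
    obtain ⟨m, hm⟩ := exists_pow_eq_self_of_coprime (x := a) (n := q)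
      (by rw [ha]; exact hcop.symm)
    have hcq : c ^ q = a ^ q := by
      rw [hc_def, hcomm.mul_pow, ← hb, pow_orderOf_eq_one, mul_one]
    rw [← hm, ← hcq]
    exact Subgroup.pow_mem _ (Subgroup.pow_mem _ (Subgroup.mem_zpowers c) q) m
  have hbR : b ∈ R := by
    obtain ⟨m, hm⟩ := exists_pow_eq_self_of_coprime (x := b) (n := p)
      (by rw [hb]; exact hcop)
    have hcp : c ^ p = b ^ p := by
      rw [hc_def, hcomm.mul_pow, ← ha, pow_orderOf_eq_one, one_mul]
    rw [← hm, ← hcp]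
    exact Subgroup.pow_mem _ (Subgroup.pow_mem _ (Subgroup.mem_zpowers c) p) m
  have hK₁eq : K₁ = Subgroup.zpowers a :=
    (aux_eq_of_le_of_card_le (Subgroup.zpowers_le.mpr haK)
      (by rw [Nat.card_zpowers, ha, hp_def])).symm
  have hK₂eq : K₂ = Subgroup.zpowers b :=
    (aux_eq_of_le_of_card_le (Subgroup.zpowers_le.mpr hbK)
      (by rw [Nat.card_zpowers, hb, hq_def])).symm
  have hK₁R : K₁ ≤ R := hK₁eq ▸ Subgroup.zpowers_le.mpr haR
  have hK₂R : K₂ ≤ R := hK₂eq ▸ Subgroup.zpowers_le.mpr hbR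
  have hrel₁R : K₁.relIndex R = q := by
    have h' := aux_card_mul_relindex hK₁R
    rw [hRcard, ← hp_def] at h'
    exact Nat.eq_of_mul_eq_mul_left h1.pos h'
  have hrel₂R : K₂.relIndex R = p := by
    have h' := aux_card_mul_relindex hK₂R
    rw [hRcard, ← hq_def, mul_comm p q] at h'
    exact Nat.eq_of_mul_eq_mul_left h2.pos h'
  have hAdj₁R : (primeIndexGraph G).Adj K₁ R := aux_adj_of_le_prime hK₁R (hrel₁R ▸ h2)
  have hAdj₂R : (primeIndexGraph G).Adj K₂ R := aux_adj_of_le_prime hK₂R (hrel₂R ▸ h1)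
  have hdvdpq : ∀ r : ℕ, r.Prime → r ∣ Nat.card G → r = p ∨ r = q := by
    intro r hr hrd
    haveI : Fact r.Prime := ⟨hr⟩
    obtain ⟨g, hg⟩ := exists_prime_orderOf_dvd_card r (by rwa [Nat.card_eq_fintype_card] at hrd)
    have hcard : (Nat.card (Subgroup.zpowers g)).Prime := by
      rw [Nat.card_zpowers, hg]; exact hr
    rcases hmem _ hcard with e | e
    · left; rw [hp_def, ← e, Nat.card_zpowers, hg]
    · right; rw [hq_def, ← e, Nat.card_zpowers, hg]
  have hsq : ∀ (K₀ : Subgroup G) (r : ℕ), r.Prime → Nat.card K₀ = r →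
      (∀ L : Subgroup G, Nat.card L = r → L = K₀) →
      K₀ ≤ R → (primeIndexGraph G).Adj K₀ R → r * r ≠ p * q → ¬(r * r ∣ Nat.card G) := by
    intro K₀ r hr hK₀card huniq hK₀R hAdjR hrr hd
    haveI : Fact r.Prime := ⟨hr⟩
    obtain ⟨T, hT⟩ := Sylow.exists_subgroup_card_pow_prime (G := G) r (n := 2)
      (by rwa [pow_two])
    letI : Fintype T := Fintype.ofFinite T
    obtain ⟨t, ht⟩ := exists_prime_orderOf_dvd_card (G := T) r
      (by rw [← Nat.card_eq_fintype_card, hT]; exact dvd_pow_self r two_ne_zero)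
    have hzt : Nat.card (Subgroup.zpowers (t : G)) = r := by
      rw [Nat.card_zpowers, Subgroup.orderOf_coe, ht]
    have hK₀T : K₀ ≤ T := (huniq _ hzt) ▸ Subgroup.zpowers_le.mpr t.2
    have hrelT : K₀.relIndex T = r := by
      have h' := aux_card_mul_relindex hK₀T
      rw [hT, hK₀card, pow_two] at h'
      exact Nat.eq_of_mul_eq_mul_left hr.pos h'
    have hAdjT : (primeIndexGraph G).Adj K₀ T := aux_adj_of_le_prime hK₀T (hrelT ▸ hr)
    have hAdjB : (primeIndexGraph G).Adj K₀ ⊥ := (aux_adj_bot_iff.mpr (hK₀card ▸ hr)).symm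
    refine aux_not_three_neighbors _ (h K₀) hAdjB hAdjT hAdjR ?_ ?_ ?_
    · refine hcard_ne ?_
      rw [Subgroup.card_bot, hT, pow_two]
      exact fun e => by nlinarith [hr.two_le]
    · refine hcard_ne ?_
      rw [Subgroup.card_bot, hRcard]
      exact (one_lt_mul h1.one_lt.le h2.one_lt).ne
    · refine hcard_ne ?_
      rw [hT, pow_two, hRcard]
      exact hrr
  have huniq₁ : ∀ L : Subgroup G, Nat.card L = p → L = K₁ := by
    intro L hL
    rcases hmem L (hL ▸ h1) with e | e
    · exact e
    · exfalso; apply hpq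
      rw [← hL, e, ← hq_def]
  have huniq₂ : ∀ L : Subgroup G, Nat.card L = q → L = K₂ := by
    intro L hL
    rcases hmem L (hL ▸ h2) with e | e
    · exfalso; apply hpq
      rw [← hL, e, ← hp_def]
    · exact e
  have hp2 : ¬(p * p ∣ Nat.card G) := hsq K₁ p h1 hp_def.symm huniq₁ hK₁R hAdj₁R
    (fun e => hpq (Nat.eq_of_mul_eq_mul_left h1.pos e))
  have hq2 : ¬(q * q ∣ Nat.card G) := hsq K₂ q h2 hq_def.symm huniq₂ hK₂R hAdj₂R
    (fun e => hpq (Nat.eq_of_mul_eq_mul_right h2.pos e).symm)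
  have hpd : p ∣ Nat.card G := hp_def ▸ K₁.card_subgroup_dvd_card
  have hqd : q ∣ Nat.card G := hq_def ▸ K₂.card_subgroup_dvd_card
  have hn : Nat.card G = p * q := by
    obtain ⟨m, hm⟩ := Nat.Coprime.mul_dvd_of_dvd_of_dvd hcop hpd hqd
    rcases eq_or_ne m 1 with rfl | hm1
    · simpa using hm
    · obtain ⟨r, hr, hrm⟩ := Nat.exists_prime_and_dvd hm1
      have hrd : r ∣ Nat.card G := hm ▸ (hrm.mul_left (p * q))
      obtain ⟨m', hm'⟩ := hrm
      rcases hdvdpq r hr hrd with rfl | rfl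
      · exact absurd ⟨q * m', by rw [hm, hm']; ring⟩ hp2
      · exact absurd ⟨p * m', by rw [hm, hm']; ring⟩ hq2
  have hRtop : R = ⊤ := Subgroup.eq_top_of_card_eq _ (by rw [hRcard, hn])
  have hcyc : IsCyclic G := isCyclic_of_orderOf_eq_card c (by rw [hc, hn])
  have e := zmodCyclicMulEquiv hcyc
  rw [hn] at e
  have hclass : ∀ H : Subgroup G, H = ⊥ ∨ H = K₁ ∨ H = K₂ ∨ H = ⊤ := by
    intro H
    have hd : Nat.card H ∣ p * q := hn ▸ H.card_subgroup_dvd_card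
    by_cases hpH : p ∣ Nat.card H <;> by_cases hqH : q ∣ Nat.card H
    · right; right; right
      exact Subgroup.eq_top_of_card_eq _ (by
        rw [hn]; exact Nat.dvd_antisymm hd (Nat.Coprime.mul_dvd_of_dvd_of_dvd hcop hpH hqH))
    · right; left
      apply huniq₁
      obtain ⟨e', he⟩ := hpH
      have h3 : e' ∣ q := (mul_dvd_mul_iff_left h1.pos.ne').mp (by rw [← he]; exact hd)
      rcases h2.eq_one_or_self_of_dvd _ h3 with rfl | rfl
      · simpa using he
      · exact absurd (he ▸ dvd_mul_left q p) hqH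
    · right; right; left
      apply huniq₂
      obtain ⟨e', he⟩ := hqH
      have h3 : e' ∣ p := (mul_dvd_mul_iff_left h2.pos.ne').mp (by
        rw [← he, mul_comm q p]; exact hd)
      rcases h1.eq_one_or_self_of_dvd _ h3 with rfl | rfl
      · simpa using he
      · exact absurd (he ▸ dvd_mul_left p q) hpH
    · left
      rw [← Subgroup.card_eq_one]
      have c1 : (Nat.card H).Coprime p := Nat.Coprime.symm (h1.coprime_iff_not_dvd.mpr hpH)
      have c2 : (Nat.card H).Coprime q := Nat.Coprime.symm (h2.coprime_iff_not_dvd.mpr hqH)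
      exact Nat.Coprime.eq_one_of_dvd (Nat.Coprime.mul_right c1 c2) hd
  -- distinctness
  have hb₁ : K₁ ≠ ⊥ := hcard_ne (by rw [Subgroup.card_bot, ← hp_def]; exact h1.one_lt.ne')
  have hb₂ : K₂ ≠ ⊥ := hcard_ne (by rw [Subgroup.card_bot, ← hq_def]; exact h2.one_lt.ne')
  have ht₁ : K₁ ≠ ⊤ := hcard_ne (by
    rw [Subgroup.card_top, hn, ← hp_def]
    exact ((Nat.lt_mul_iff_one_lt_right h1.pos).mpr h2.one_lt).ne)
  have ht₂ : K₂ ≠ ⊤ := hcard_ne (by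
    rw [Subgroup.card_top, hn, ← hq_def]
    exact ((Nat.lt_mul_iff_one_lt_left h2.pos).mpr h1.one_lt).ne)
  have hbt : (⊥ : Subgroup G) ≠ ⊤ := hcard_ne (by
    rw [Subgroup.card_bot, Subgroup.card_top, hn]
    exact (one_lt_mul h1.one_lt.le h2.one_lt).ne)
  -- adjacency facts
  have A1 : (primeIndexGraph G).Adj ⊥ K₁ := aux_adj_bot_iff.mpr h1
  have A2 : (primeIndexGraph G).Adj ⊥ K₂ := aux_adj_bot_iff.mpr h2
  have A3 : (primeIndexGraph G).Adj K₁ ⊤ := hRtop ▸ hAdj₁R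
  have A4 : (primeIndexGraph G).Adj K₂ ⊤ := hRtop ▸ hAdj₂R
  have N1 : ¬ (primeIndexGraph G).Adj ⊥ ⊤ := by
    rw [primeIndexGraph, SimpleGraph.fromRel_adj]
    rintro ⟨hne, ⟨-, hp'⟩ | ⟨hle, -⟩⟩
    · rw [Subgroup.relIndex_bot_left, Subgroup.card_top, hn] at hp'
      rcases Nat.prime_mul_iff.mp hp' with ⟨-, e'⟩ | ⟨-, e'⟩
      · exact h2.one_lt.ne' e'
      · exact h1.one_lt.ne' e'
    · exact hne (le_antisymm bot_le hle)
  have N2 : ¬ (primeIndexGraph G).Adj K₁ K₂ := by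
    rw [primeIndexGraph, SimpleGraph.fromRel_adj]
    rintro ⟨-, ⟨hle, -⟩ | ⟨hle, -⟩⟩
    · have hdd := Subgroup.card_dvd_of_le hle
      rw [← hp_def, ← hq_def] at hdd
      exact hpq ((Nat.prime_dvd_prime_iff_eq h1 h2).mp hdd)
    · have hdd := Subgroup.card_dvd_of_le hle
      rw [← hp_def, ← hq_def] at hdd
      exact hpq ((Nat.prime_dvd_prime_iff_eq h2 h1).mp hdd).symm
  -- the equivalence
  let f : Fin 4 → Subgroup G := ![⊥, K₁, ⊤, K₂]
  let g' : Subgroup G → Fin 4 := fun H =>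
    if H = ⊥ then 0 else if H = K₁ then 1 else if H = ⊤ then 2 else 3
  have hgf : ∀ i, g' (f i) = i := by
    intro i
    fin_cases i <;>
      simp [f, g', hb₁, hb₂, ht₁, ht₂, hK12, hbt, Ne.symm hbt, Ne.symm ht₁, Ne.symm hK12]
  have hfg : ∀ H, f (g' H) = H := by
    intro H
    rcases hclass H with rfl | rfl | rfl | rfl <;>
      simp [f, g', hb₁, hb₂, ht₁, ht₂, hK12, hbt, Ne.symm hbt, Ne.symm ht₁, Ne.symm hK12]
  let eqv : Fin 4 ≃ Subgroup G := ⟨f, g', hgf, hfg⟩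
  have hiso : ∀ i j : Fin 4,
      (primeIndexGraph G).Adj (f i) (f j) ↔ (SimpleGraph.cycleGraph 4).Adj i j := by
    intro i j
    fin_cases i <;> fin_cases j
    · exact iff_of_false ((primeIndexGraph G).irrefl) (by decide)
    · exact iff_of_true A1 (by decide)
    · exact iff_of_false N1 (by decide)
    · exact iff_of_true A2 (by decide)
    · exact iff_of_true A1.symm (by decide)
    · exact iff_of_false ((primeIndexGraph G).irrefl) (by decide)
    · exact iff_of_true A3 (by decide)
    · exact iff_of_false N2 (by decide)
    · exact iff_of_false (fun h' => N1 h'.symm) (by decide)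
    · exact iff_of_true A3.symm (by decide)
    · exact iff_of_false ((primeIndexGraph G).irrefl) (by decide)
    · exact iff_of_true A4.symm (by decide)
    · exact iff_of_true A2.symm (by decide)
    · exact iff_of_false (fun h' => N2 h'.symm) (by decide)
    · exact iff_of_true A4 (by decide)
    · exact iff_of_false ((primeIndexGraph G).irrefl) (by decide)
  exact ⟨p, q, h1, h2, hpq, ⟨e.symm⟩,
    ⟨(SimpleGraph.Iso.symm ⟨eqv, fun {i j} => hiso i j⟩)⟩⟩
end

section
/- Let G be a finite group and N a normal subgroup of G. If Π(N) is connected and for every subgroup H/N of G/N the graph Π(H/N) is connected, then Π(G) is connected. -/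
open Subgroup

lemma pig_adj_of {G : Type*} [Group G] {A B : Subgroup G} (h : A ≤ B)
    (hp : (A.relIndex B).Prime) : (primeIndexGraph G).Adj A B := by
  have hne : A ≠ B := by
    rintro rfl
    rw [Subgroup.relIndex_self] at hp
    exact hp.one_lt.ne' rfl
  rw [primeIndexGraph, SimpleGraph.fromRel_adj]
  exact ⟨hne, Or.inl ⟨h, hp⟩⟩

lemma pig_reachable_map {G H' : Type*} [Group G] [Group H'] (f : Subgroup G → Subgroup H')
    (hmono : ∀ {A B : Subgroup G}, A ≤ B → f A ≤ f B)
    (hrel : ∀ {A B : Subgroup G}, A ≤ B → (f A).relIndex (f B) = A.relIndex B)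
    {A B : Subgroup G} (h : (primeIndexGraph G).Reachable A B) :
    (primeIndexGraph H').Reachable (f A) (f B) := by
  refine SimpleGraph.Reachable.map ⟨f, ?_⟩ h
  intro a b hab
  rw [primeIndexGraph, SimpleGraph.fromRel_adj] at hab
  obtain ⟨hne, h1 | h1⟩ := hab
  · exact pig_adj_of (hmono h1.1) (by rw [hrel h1.1]; exact h1.2)
  · exact (pig_adj_of (hmono h1.1) (by rw [hrel h1.1]; exact h1.2)).symm

lemma relindex_map_of_injective {G G' : Type*} [Group G] [Group G'] {f : G →* G'}
    (hf : Function.Injective f) (A B : Subgroup G) :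
    (A.map f).relIndex (B.map f) = A.relIndex B := by
  conv_rhs => rw [← Subgroup.comap_map_eq_self_of_injective hf A]
  rw [Subgroup.relIndex_comap]

theorem primeIndexGraph_connected_of_normal (G : Type*) [Group G] [Fintype G]
    (N : Subgroup G) [N.Normal]
    (h1 : (primeIndexGraph N).Connected)
    (h2 : ∀ Q : Subgroup (G ⧸ N), (primeIndexGraph Q).Connected) :
    (primeIndexGraph G).Connected := by
  suffices hb : ∀ H : Subgroup G, (primeIndexGraph G).Reachable H ⊥ by
    rw [SimpleGraph.connected_iff]
    exact ⟨fun H K => (hb H).trans (hb K).symm, ⟨⊥⟩⟩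
  intro H
  -- Step 1: H is reachable from N ⊓ H
  set φ := QuotientGroup.mk' N with hφ
  set Q : Subgroup (G ⧸ N) := H.map φ with hQ
  set ψ : ↥H →* G ⧸ N := φ.comp H.subtype with hψ
  have hψrange : ψ.range = Q := by
    rw [hψ, MonoidHom.range_comp, Subgroup.range_subtype]
  set f : Subgroup ↥Q → Subgroup G :=
    fun A => (Subgroup.comap ψ (A.map Q.subtype)).map H.subtype with hf
  have hmono : ∀ {A B : Subgroup ↥Q}, A ≤ B → f A ≤ f B := by
    intro A B hAB
    exact Subgroup.map_mono (Subgroup.comap_mono (Subgroup.map_mono hAB))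
  have hrel : ∀ {A B : Subgroup ↥Q}, A ≤ B → (f A).relIndex (f B) = A.relIndex B := by
    intro A B hAB
    rw [hf]
    rw [relindex_map_of_injective H.subtype_injective, Subgroup.relIndex_comap,
      Subgroup.map_comap_eq, hψrange,
      inf_eq_right.mpr (Subgroup.map_subtype_le B),
      relindex_map_of_injective Q.subtype_injective]
  have hreach1 : (primeIndexGraph G).Reachable (f ⊥) (f ⊤) :=
    pig_reachable_map f hmono hrel ((h2 Q).preconnected ⊥ ⊤)
  have hftop : f ⊤ = H := by
    have hcom : Subgroup.comap ψ Q = ⊤ :=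
      top_unique fun x _ => by
        rw [Subgroup.mem_comap, ← hψrange]; exact ⟨x, rfl⟩
    rw [hf]
    simp only [← MonoidHom.range_eq_map, Subgroup.range_subtype, hcom,
      ← MonoidHom.range_eq_map, Subgroup.range_subtype]
  have hfbot : f ⊥ = N ⊓ H := by
    rw [hf]
    have hker : ψ.ker = N.subgroupOf H := by
      rw [hψ, ← MonoidHom.comap_ker, QuotientGroup.ker_mk']
      rfl
    simp only [Subgroup.map_bot, MonoidHom.comap_bot, hker,
      Subgroup.subgroupOf_map_subtype]
  -- Step 2: N ⊓ H is reachable from ⊥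
  set g : Subgroup ↥N → Subgroup G := fun A => A.map N.subtype with hg
  have hgmono : ∀ {A B : Subgroup ↥N}, A ≤ B → g A ≤ g B := fun hAB =>
    Subgroup.map_mono hAB
  have hgrel : ∀ {A B : Subgroup ↥N}, A ≤ B → (g A).relIndex (g B) = A.relIndex B := by
    intro A B _
    exact relindex_map_of_injective N.subtype_injective A B
  have hreach2 : (primeIndexGraph G).Reachable (g ((N ⊓ H).subgroupOf N)) (g ⊥) :=
    pig_reachable_map g hgmono hgrel (h1.preconnected _ ⊥)
  have hg1 : g ((N ⊓ H).subgroupOf N) = N ⊓ H := by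
    rw [hg]
    simp only [Subgroup.subgroupOf_map_subtype]
    rw [inf_comm]
    simp
  have hg2 : g ⊥ = ⊥ := by rw [hg]; exact Subgroup.map_bot _
  rw [hftop, hfbot] at hreach1
  rw [hg1, hg2] at hreach2
  exact hreach1.symm.trans hreach2
end

section
/- If G is a finite solvable group, then the prime index graph Π(G) is connected. -/
open Subgroup

/-- A finite nontrivial commutative group has a subgroup of prime index. -/
lemma exists_index_prime_of_comm (A : Type*) [CommGroup A] [Finite A] [Nontrivial A] :
    ∃ M : Subgroup A, M.index.Prime := by
  obtain ⟨M, hM, -⟩ := ((Finite.to_isCoatomic (α := Subgroup A)).eq_top_or_exists_le_coatom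
    (⊥ : Subgroup A)).resolve_left bot_ne_top
  refine ⟨M, ?_⟩
  have hnt : Nontrivial (A ⧸ M) := by
    have := Subgroup.one_lt_index_of_ne_top (H := M) hM.1
    rw [Subgroup.index_eq_card] at this
    exact Finite.one_lt_card_iff_nontrivial.mp this
  have hsimple : IsSimpleGroup (A ⧸ M) := by
    constructor
    intro S _
    have hS : S = (S.comap (QuotientGroup.mk' M)).map (QuotientGroup.mk' M) :=
      (Subgroup.map_comap_eq_self_of_surjective (QuotientGroup.mk'_surjective M) S).symm
    have hle : M ≤ S.comap (QuotientGroup.mk' M) := by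
      intro x hx
      simp only [Subgroup.mem_comap]
      rw [show (QuotientGroup.mk' M) x = 1 from (QuotientGroup.eq_one_iff x).mpr hx]
      exact S.one_mem
    rcases hle.lt_or_eq with hlt | heq
    · right
      rw [hS, hM.2 _ hlt]
      exact Subgroup.map_top_of_surjective _ (QuotientGroup.mk'_surjective M)
    · left
      rw [hS, ← heq, Subgroup.map_eq_bot_iff, QuotientGroup.ker_mk']
  have := IsSimpleGroup.prime_card (α := A ⧸ M)
  rwa [Subgroup.index_eq_card]

/-- A finite nontrivial solvable group has a subgroup of prime index. -/
lemma exists_index_prime_of_solvable (Γ : Type*) [Group Γ] [Finite Γ] [Nontrivial Γ]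
    [Group.IsSolvable Γ] : ∃ M : Subgroup Γ, M.index.Prime := by
  have hc : commutator Γ ≠ ⊤ := by
    intro h
    obtain ⟨n, hn⟩ := Group.IsSolvable.solvable (G := Γ)
    have htop : ∀ n, derivedSeries Γ n = ⊤ := by
      intro n
      induction n with
      | zero => rfl
      | succ n ih => rw [derivedSeries_succ, ih, ← commutator_def]; exact h
    exact bot_ne_top (hn ▸ htop n)
  have hnt : Nontrivial (Abelianization Γ) := by
    have := Subgroup.one_lt_index_of_ne_top (H := commutator Γ) hc
    rw [Subgroup.index_eq_card] at this
    exact Finite.one_lt_card_iff_nontrivial.mp this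
  obtain ⟨M, hM⟩ := exists_index_prime_of_comm (Abelianization Γ)
  refine ⟨M.comap Abelianization.of, ?_⟩
  have hsurj : Function.Surjective (Abelianization.of (G := Γ)) :=
    QuotientGroup.mk'_surjective (commutator Γ)
  rwa [Subgroup.index_comap, MonoidHom.range_eq_top_of_surjective _ hsurj,
    Subgroup.relIndex_top_right]

lemma primeIndexGraph_reachable_bot (G : Type*) [Group G] [Fintype G]
    (h : IsSolvable G) : ∀ H : Subgroup G, (primeIndexGraph G).Reachable H ⊥ := by
  have key : ∀ n : ℕ, ∀ H : Subgroup G, Nat.card H ≤ n →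
      (primeIndexGraph G).Reachable H ⊥ := by
    intro n
    induction n with
    | zero =>
      intro H hH
      exact absurd hH (by simpa using Nat.card_pos (α := H).ne')
    | succ n ih =>
      intro H hH
      rcases H.bot_or_nontrivial with rfl | hnt
      · exact SimpleGraph.Reachable.refl _
      · obtain ⟨M, hM⟩ := (by haveI : Group.IsSolvable G := h; exact exists_index_prime_of_solvable H)
        set K : Subgroup G := M.map H.subtype with hK
        have hKle : K ≤ H := Subgroup.map_subtype_le M
        have hrel : K.relIndex H = M.index := by
          rw [Subgroup.relIndex, Subgroup.subgroupOf, hK,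
            Subgroup.comap_map_eq_self_of_injective H.subtype_injective]
        have hKne : K ≠ H := by
          intro hEq
          have : K.relIndex H = 1 := by rw [hEq, Subgroup.relIndex_self]
          rw [hrel] at this
          exact hM.ne_one this
        have hcardK : Nat.card K = Nat.card M :=
          (Nat.card_eq_of_bijective _ (Subgroup.equivMapOfInjective M H.subtype
            H.subtype_injective).bijective).symm
        have hlt : Nat.card K < Nat.card H := by
          have hmul := M.index_mul_card
          have h2 : 2 ≤ M.index := hM.two_le
          have hpos : 0 < Nat.card M := Nat.card_pos
          rw [hcardK]
          nlinarith
        have hadj : (primeIndexGraph G).Adj K H := by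
          refine ⟨hKne, Or.inl ⟨hKle, ?_⟩⟩
          rwa [hrel]
        exact (hadj.symm.reachable).trans (ih K (by omega))
  intro H
  exact key (Nat.card H) H le_rfl

theorem primeIndexGraph_solvable_connected (G : Type*) [Group G] [Fintype G]
    (h : IsSolvable G) : (primeIndexGraph G).Connected := by
  rw [SimpleGraph.connected_iff]
  refine ⟨fun u v => ?_, ⟨⊥⟩⟩
  exact (primeIndexGraph_reachable_bot G h u).trans
    (primeIndexGraph_reachable_bot G h v).symm
end

section
/- Let G be a finite group and N a normal subgroup of G such that Π(N) is connected and G/N is solvable. Then Π(G) is connected. -/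
private lemma relindex_def' {G : Type*} [Group G] (A B : Subgroup G) :
    A.relIndex B = (A.subgroupOf B).index := rfl

private lemma aux_normal {G : Type*} [Group G] {K H₂ H : Subgroup G} (_hKH₂ : K ≤ H₂)
    (h₂ : H₂ ≤ H) (hN : (K.subgroupOf H).Normal) : (K.subgroupOf H₂).Normal := by
  constructor
  intro n hn g
  rw [Subgroup.mem_subgroupOf] at hn ⊢
  have := hN.conj_mem ⟨(n : G), h₂ n.2⟩ (by rwa [Subgroup.mem_subgroupOf]) ⟨(g : G), h₂ g.2⟩
  rw [Subgroup.mem_subgroupOf] at this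
  simpa using this

private lemma solvable_quotient_of_ker_iff {H : Type*} [Group H] {Q : Type*} [Group Q]
    [Group.IsSolvable Q] (f : H →* Q) (S : Subgroup H) [S.Normal] (hS : ∀ x, x ∈ S ↔ f x = 1) :
    IsSolvable (H ⧸ S) := by
  let g := QuotientGroup.lift S f (fun x hx => (hS x).mp hx)
  have hg : Function.Injective g := by
    rw [← MonoidHom.ker_eq_bot_iff, eq_bot_iff]
    intro a ha
    obtain ⟨x, rfl⟩ := QuotientGroup.mk'_surjective S a
    have hx : f x = 1 := ha
    have hxS : x ∈ S := (hS x).mpr hx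
    simpa [Subgroup.mem_bot, QuotientGroup.eq_one_iff] using hxS
  exact solvable_of_solvable_injective hg

universe u

private lemma exists_prime_index_comm : ∀ (n : ℕ) (A : Type u) [CommGroup A] [Finite A],
    Nontrivial A → Nat.card A ≤ n → ∃ B : Subgroup A, B.index.Prime := by
  intro n
  induction n with
  | zero =>
    intro A _ _ hA hn
    have := Nat.card_pos (α := A)
    omega
  | succ n ih =>
    intro A _ _ hA hn
    have hcard : 1 < Nat.card A := Finite.one_lt_card_iff_nontrivial.mpr hA
    have hpp : (Nat.card A).minFac.Prime := Nat.minFac_prime (by omega)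
    haveI : Fact (Nat.card A).minFac.Prime := ⟨hpp⟩
    haveI : Fintype A := Fintype.ofFinite A
    obtain ⟨x, hx⟩ := exists_prime_orderOf_dvd_card (G := A) (Nat.card A).minFac
      (by rw [← Nat.card_eq_fintype_card]; exact Nat.minFac_dvd _)
    set Z := Subgroup.zpowers x with hZ
    have hZcard : Nat.card Z = (Nat.card A).minFac := by
      rw [Nat.card_zpowers, hx]
    have hmul : Nat.card Z * Z.index = Nat.card A := Subgroup.card_mul_index Z
    by_cases htriv : Nontrivial (A ⧸ Z)
    · have hlt : Z.index < Nat.card A := by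
        have h2 : 2 ≤ Nat.card Z := by rw [hZcard]; exact hpp.two_le
        have hpos : 0 < Z.index := Nat.pos_of_ne_zero Subgroup.index_ne_zero_of_finite
        nlinarith
      have hqcard : Nat.card (A ⧸ Z) = Z.index := (Subgroup.index_eq_card Z).symm
      obtain ⟨B', hB'⟩ := ih (A ⧸ Z) htriv (by omega)
      refine ⟨B'.comap (QuotientGroup.mk' Z), ?_⟩
      rwa [Subgroup.index_comap_of_surjective B' (QuotientGroup.mk'_surjective Z)]
    · have hsub : Subsingleton (A ⧸ Z) := not_nontrivial_iff_subsingleton.mp htriv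
      have hidx : Z.index = 1 := by
        rw [Subgroup.index_eq_card]
        exact Nat.card_eq_one_iff_unique.mpr ⟨⟨fun a b => Subsingleton.elim a b⟩, ⟨1⟩⟩
      refine ⟨⊥, ?_⟩
      rw [Subgroup.index_bot]
      rw [hidx, mul_one] at hmul
      rw [← hmul, hZcard]
      exact hpp

private lemma exists_prime_index_normal (Q : Type u) [Group Q] [Finite Q] [Nontrivial Q]
    [Group.IsSolvable Q] : ∃ M : Subgroup Q, M.Normal ∧ M.index.Prime := by
  have hcomm : commutator Q ≠ ⊤ := by
    intro h
    obtain ⟨n, hn⟩ := Group.IsSolvable.solvable (G := Q)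
    have htop : ∀ m, derivedSeries Q m = ⊤ := by
      intro m
      induction m with
      | zero => rfl
      | succ m ihm => rw [derivedSeries_succ, ihm, ← commutator_def, h]
    rw [htop n] at hn
    exact top_ne_bot hn
  haveI : Nontrivial (Abelianization Q) := by
    rw [← Finite.one_lt_card_iff_nontrivial]
    have h1 : (commutator Q).index ≠ 1 := fun h => hcomm (Subgroup.index_eq_one.mp h)
    have h0 : (commutator Q).index ≠ 0 := Subgroup.index_ne_zero_of_finite
    have : Nat.card (Abelianization Q) = (commutator Q).index := (Subgroup.index_eq_card _).symm
    omega
  obtain ⟨B, hB⟩ := exists_prime_index_comm (Nat.card (Abelianization Q)) (Abelianization Q)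
    inferInstance le_rfl
  refine ⟨B.comap Abelianization.of, Subgroup.Normal.comap inferInstance _, ?_⟩
  have hsurj : Function.Surjective (Abelianization.of (G := Q)) :=
    QuotientGroup.mk'_surjective _
  rwa [Subgroup.index_comap_of_surjective B hsurj]

private lemma relindex_map_subtype {G : Type*} [Group G] (N : Subgroup G) (A B : Subgroup N) :
    (A.map N.subtype).relIndex (B.map N.subtype) = A.relIndex B := by
  conv_rhs => rw [← Subgroup.comap_map_eq_self_of_injective N.subtype_injective A]
  rw [Subgroup.relIndex_comap]

private lemma reach_aux {G : Type u} [Group G] [Finite G] :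
    ∀ (n : ℕ) (K H : Subgroup G), K ≤ H → K.relIndex H ≤ n →
      ∀ [(K.subgroupOf H).Normal], IsSolvable (H ⧸ K.subgroupOf H) →
      (primeIndexGraph G).Reachable K H := by
  intro n
  induction n with
  | zero =>
    intro K H hKH hn _ _
    have h0 : K.relIndex H ≠ 0 := by
      rw [relindex_def']; exact Subgroup.index_ne_zero_of_finite
    omega
  | succ n ih =>
    intro K H hKH hn hnorm hsolv
    haveI := hnorm
    by_cases heq : K.relIndex H = 1
    · have : K = H := le_antisymm hKH (Subgroup.relIndex_eq_one.mp heq)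
      rw [this]
    · have h0 : K.relIndex H ≠ 0 := by
        rw [relindex_def']; exact Subgroup.index_ne_zero_of_finite
      haveI : Nontrivial (H ⧸ K.subgroupOf H) := by
        rw [← Finite.one_lt_card_iff_nontrivial]
        have : Nat.card (H ⧸ K.subgroupOf H) = K.relIndex H :=
          ((Subgroup.index_eq_card _).symm : _)
        omega
      haveI : Group.IsSolvable (H ⧸ K.subgroupOf H) := hsolv
      obtain ⟨M, hMn, hMp⟩ := exists_prime_index_normal (H ⧸ K.subgroupOf H)
      set f : ↥H →* (H ⧸ K.subgroupOf H) := QuotientGroup.mk' (K.subgroupOf H) with hf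
      set H₂ : Subgroup G := (M.comap f).map H.subtype with hH₂
      have h₂H : H₂ ≤ H := Subgroup.map_subtype_le _
      have hKH₂ : K ≤ H₂ := by
        have h1 : K.subgroupOf H ≤ M.comap f := by
          intro y hy
          have hy1 : f y = 1 := by
            rw [hf, QuotientGroup.mk'_apply, QuotientGroup.eq_one_iff]
            exact hy
          rw [Subgroup.mem_comap, hy1]
          exact M.one_mem
        calc K = (K.subgroupOf H).map H.subtype := by
              rw [Subgroup.subgroupOf_map_subtype, inf_eq_left.mpr hKH]
          _ ≤ H₂ := Subgroup.map_mono h1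
      have hsub : H₂.subgroupOf H = M.comap f :=
        Subgroup.comap_map_eq_self_of_injective H.subtype_injective _
      have hrel2 : H₂.relIndex H = M.index := by
        rw [relindex_def', hsub, Subgroup.index_comap_of_surjective M (QuotientGroup.mk'_surjective _)]
      have hmul : K.relIndex H₂ * H₂.relIndex H = K.relIndex H :=
        Subgroup.relIndex_mul_relIndex K H₂ H hKH₂ h₂H
      have hpos : K.relIndex H₂ ≠ 0 := by
        rw [relindex_def']; exact Subgroup.index_ne_zero_of_finite
      have hlt : K.relIndex H₂ ≤ n := by
        have h2p : 2 ≤ H₂.relIndex H := by rw [hrel2]; exact hMp.two_le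
        have : K.relIndex H₂ * 2 ≤ K.relIndex H := by
          calc K.relIndex H₂ * 2 ≤ K.relIndex H₂ * (H₂.relIndex H) :=
                Nat.mul_le_mul_left _ h2p
            _ = K.relIndex H := hmul
        omega
      have hadj : (primeIndexGraph G).Adj H₂ H := by
        rw [primeIndexGraph, SimpleGraph.fromRel_adj]
        refine ⟨?_, Or.inl ⟨h₂H, hrel2 ▸ hMp⟩⟩
        intro h
        rw [h, Subgroup.relIndex_self] at hrel2
        exact hMp.ne_one hrel2.symm
      have hnorm₂ : (K.subgroupOf H₂).Normal := aux_normal hKH₂ h₂H hnorm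
      haveI := hnorm₂
      have hsolv₂ : IsSolvable (H₂ ⧸ K.subgroupOf H₂) := by
        refine solvable_quotient_of_ker_iff (f.comp (Subgroup.inclusion h₂H))
          (K.subgroupOf H₂) (fun x => ?_)
        rw [Subgroup.mem_subgroupOf]
        rw [MonoidHom.comp_apply, hf]
        rw [QuotientGroup.mk'_apply, QuotientGroup.eq_one_iff, Subgroup.mem_subgroupOf]
        simp [Subgroup.coe_inclusion]
      exact (ih K H₂ hKH₂ hlt hsolv₂).trans hadj.reachable

theorem primeIndexGraph_connected_of_solvable_quotient (G : Type*) [Group G]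
    [Fintype G] (N : Subgroup G) [N.Normal]
    (h1 : (primeIndexGraph N).Connected) (h2 : IsSolvable (G ⧸ N)) :
    (primeIndexGraph G).Connected := by
  haveI : Finite G := inferInstance
  rw [SimpleGraph.connected_iff]
  refine ⟨fun H K => ?_, ⟨⊥⟩⟩
  -- every subgroup H is reachable from H ⊓ N
  have key : ∀ H : Subgroup G, (primeIndexGraph G).Reachable (H ⊓ N) H := by
    intro H
    have hle : H ⊓ N ≤ H := inf_le_left
    have hsub : (H ⊓ N).subgroupOf H = N.subgroupOf H := by
      ext x
      simp [Subgroup.mem_subgroupOf, x.2]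
    have hnorm : ((H ⊓ N).subgroupOf H).Normal := by
      rw [hsub]; infer_instance
    haveI := hnorm
    have hsolv : IsSolvable (H ⧸ (H ⊓ N).subgroupOf H) := by
      haveI : Group.IsSolvable (G ⧸ N) := h2
      refine solvable_quotient_of_ker_iff ((QuotientGroup.mk' N).comp H.subtype)
        ((H ⊓ N).subgroupOf H) (fun x => ?_)
      rw [hsub, Subgroup.mem_subgroupOf]
      rw [MonoidHom.comp_apply, QuotientGroup.mk'_apply, QuotientGroup.eq_one_iff]
      rfl
    exact reach_aux ((H ⊓ N).relIndex H) (H ⊓ N) H hle le_rfl hsolv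
  -- graph homomorphism from primeIndexGraph N
  let φ : primeIndexGraph ↥N →g primeIndexGraph G := by
    refine ⟨Subgroup.map N.subtype, ?_⟩
    intro A B hAB
    rw [primeIndexGraph, SimpleGraph.fromRel_adj] at hAB ⊢
    obtain ⟨hne, hor⟩ := hAB
    refine ⟨fun h => hne (Subgroup.map_injective N.subtype_injective h), ?_⟩
    rcases hor with ⟨hle, hp⟩ | ⟨hle, hp⟩
    · exact Or.inl ⟨Subgroup.map_mono hle, by rwa [relindex_map_subtype]⟩
    · exact Or.inr ⟨Subgroup.map_mono hle, by rwa [relindex_map_subtype]⟩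
  -- H ⊓ N and K ⊓ N are reachable via the connectivity of primeIndexGraph N
  have hmid : (primeIndexGraph G).Reachable (H ⊓ N) (K ⊓ N) := by
    have hr := h1.preconnected ((H ⊓ N).subgroupOf N) ((K ⊓ N).subgroupOf N)
    have hmap := hr.map φ
    have e1 : ((H ⊓ N).subgroupOf N).map N.subtype = H ⊓ N := by
      rw [Subgroup.subgroupOf_map_subtype, inf_assoc, inf_idem]
    have e2 : ((K ⊓ N).subgroupOf N).map N.subtype = K ⊓ N := by
      rw [Subgroup.subgroupOf_map_subtype, inf_assoc, inf_idem]
    rw [← e1, ← e2]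
    exact hmap
  exact ((key H).symm.trans hmid).trans (key K)
end

section
/- Let G be a group and N a normal subgroup of G. If the prime index graph Π(G) is connected, then both Π(N) and Π(G/N) are connected. -/
open Subgroup Pointwise

/-- Second isomorphism theorem for relative indices: `[A ⊔ M : A] = [M : A ⊓ M]`
when `M` is normal. -/
theorem relindex_sup_eq_relindex_of_normal {Γ : Type*} [Group Γ] (A M : Subgroup Γ)
    [M.Normal] : A.relIndex (A ⊔ M) = A.relIndex M := by
  have hle : M ≤ A ⊔ M := le_sup_right
  let f : ↥M ⧸ A.subgroupOf M → ↥(A ⊔ M) ⧸ A.subgroupOf (A ⊔ M) :=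
    Quotient.map' (fun m => ⟨m, hle m.2⟩)
      (by
        intro m₁ m₂ hm
        rw [QuotientGroup.leftRel_apply] at hm ⊢
        simpa [Subgroup.mem_subgroupOf] using hm)
  have hbij : Function.Bijective f := by
    constructor
    · intro x y
      induction x using Quotient.inductionOn' with
      | h m₁ =>
      induction y using Quotient.inductionOn' with
      | h m₂ =>
      intro hxy
      simp only [f, Quotient.map'_mk''] at hxy
      rw [Quotient.eq''] at hxy ⊢
      rw [QuotientGroup.leftRel_apply] at hxy ⊢
      simpa [Subgroup.mem_subgroupOf] using hxy
    · intro y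
      induction y using Quotient.inductionOn' with
      | h x =>
      have hx : (x : Γ) ∈ ((M : Set Γ) * (A : Set Γ)) := by
        rw [← Subgroup.normal_mul M A, sup_comm M A, SetLike.mem_coe]
        exact x.2
      obtain ⟨m, hm, a, ha, hma⟩ := hx
      refine ⟨Quotient.mk'' ⟨m, hm⟩, ?_⟩
      simp only [f, Quotient.map'_mk'']
      rw [Quotient.eq'', QuotientGroup.leftRel_apply]
      have : (⟨m, hle hm⟩ : ↥(A ⊔ M))⁻¹ * x = (⟨m, hle hm⟩ : ↥(A ⊔ M))⁻¹ * x := rfl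
      rw [Subgroup.mem_subgroupOf]
      show (m : Γ)⁻¹ * (x : Γ) ∈ A
      have : (m : Γ)⁻¹ * (x : Γ) = a := by
        rw [← hma]; group
      rw [this]; exact ha
  rw [relIndex, relIndex, Subgroup.index, Subgroup.index]
  exact (Nat.card_congr (Equiv.ofBijective f hbij)).symm

/-- For `M` normal, `[M : A ⊓ M]` divides `[G : A]` (as `relindex`/`index`). -/
theorem relindex_normal_dvd_index {Γ : Type*} [Group Γ] (A M : Subgroup Γ) [M.Normal] :
    A.relIndex M ∣ A.index := by
  rw [← relindex_sup_eq_relindex_of_normal A M]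
  exact relIndex_dvd_index_of_le le_sup_left

theorem relindex_subgroupOf_dvd {G : Type*} [Group G] (N : Subgroup G) [N.Normal]
    (A B : Subgroup G) :
    (A.subgroupOf N).relIndex (B.subgroupOf N) ∣ A.relIndex B := by
  have h1 : (A.subgroupOf N).relIndex (B.subgroupOf N) = A.relIndex (B ⊓ N) := by
    rw [← inf_subgroupOf_right B N, relIndex_subgroupOf inf_le_right]
  have h2 : A.relIndex (B ⊓ N) = (A.subgroupOf B).relIndex (N.subgroupOf B) := by
    rw [← inf_subgroupOf_right N B, relIndex_subgroupOf inf_le_right, inf_comm B N]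
  rw [h1, h2]
  exact relindex_normal_dvd_index (A.subgroupOf B) (N.subgroupOf B)

theorem relindex_map_mk'_dvd {G : Type*} [Group G] (N : Subgroup G) [N.Normal]
    (A B : Subgroup G) :
    ((A.map (QuotientGroup.mk' N)).relIndex (B.map (QuotientGroup.mk' N))) ∣
      A.relIndex B := by
  rw [← relIndex_comap, comap_map_eq, QuotientGroup.ker_mk']
  exact relIndex_dvd_of_le_left B le_sup_left

/-- Transfer connectedness of the prime index graph along a surjective, monotone,
relindex-dividing map of subgroup lattices. -/
theorem primeIndexGraph_connected_transfer {G G' : Type*} [Group G] [Group G']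
    (f : Subgroup G → Subgroup G') (hmono : Monotone f)
    (hdvd : ∀ A B : Subgroup G, (f A).relIndex (f B) ∣ A.relIndex B)
    (hsurj : Function.Surjective f) (h : (primeIndexGraph G).Connected) :
    (primeIndexGraph G').Connected := by
  have key : ∀ A B : Subgroup G, A ≤ B → (A.relIndex B).Prime →
      f A = f B ∨ (primeIndexGraph G').Adj (f A) (f B) := by
    intro A B hle hp
    rcases hp.eq_one_or_self_of_dvd _ (hdvd A B) with h1 | h1
    · exact Or.inl (le_antisymm (hmono hle) (Subgroup.relIndex_eq_one.mp h1))
    · refine Or.inr ((SimpleGraph.fromRel_adj _ _ _).mpr ⟨?_, Or.inl ⟨hmono hle, h1 ▸ hp⟩⟩)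
      intro hEq
      rw [hEq, Subgroup.relIndex_self] at h1
      exact hp.ne_one h1.symm
  have hadj : ∀ A B : Subgroup G, (primeIndexGraph G).Adj A B →
      f A = f B ∨ (primeIndexGraph G').Adj (f A) (f B) := by
    intro A B hAB
    rw [primeIndexGraph, SimpleGraph.fromRel_adj] at hAB
    rcases hAB.2 with ⟨hle, hp⟩ | ⟨hle, hp⟩
    · exact key A B hle hp
    · rcases key B A hle hp with h1 | h1
      · exact Or.inl h1.symm
      · exact Or.inr h1.symm
  constructor
  · intro x y
    obtain ⟨a, rfl⟩ := hsurj x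
    obtain ⟨b, rfl⟩ := hsurj y
    obtain ⟨w⟩ := h.preconnected a b
    induction w with
    | nil => exact SimpleGraph.Reachable.refl _
    | cons ha w ih =>
      rcases hadj _ _ ha with he | he
      · rw [he]; exact ih
      · exact he.reachable.trans ih

theorem primeIndexGraph_connected_normal_quotient (G : Type*) [Group G]
    (N : Subgroup G) [N.Normal] (h : (primeIndexGraph G).Connected) :
    (primeIndexGraph N).Connected ∧ (primeIndexGraph (G ⧸ N)).Connected := by
  constructor
  · refine primeIndexGraph_connected_transfer (fun H => H.subgroupOf N)
      (fun A B hAB => Subgroup.comap_mono hAB) (relindex_subgroupOf_dvd N) ?_ h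
    intro K
    exact ⟨K.map N.subtype, Subgroup.comap_map_eq_self_of_injective N.subtype_injective K⟩
  · refine primeIndexGraph_connected_transfer (fun H => H.map (QuotientGroup.mk' N))
      (fun A B hAB => Subgroup.map_mono hAB) (relindex_map_mk'_dvd N) ?_ h
    intro K
    exact ⟨K.comap (QuotientGroup.mk' N),
      Subgroup.map_comap_eq_self_of_surjective (QuotientGroup.mk'_surjective N) K⟩
end

section
/- Let G ≅ H × K for groups H and K. If Π(G) is connected, then both Π(H) and Π(K) are connected. -/
lemma relindex_map_dvd {G H : Type*} [Group G] [Group H] (φ : G →* H)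
    {S T : Subgroup G} :
    (S.map φ).relIndex (T.map φ) ∣ S.relIndex T := by
  have h1 : (S.map φ).relIndex (T.map φ) = ((S.map φ).comap φ).relIndex T :=
    (Subgroup.relIndex_comap (H := S.map φ) φ T).symm
  rw [h1]
  exact Subgroup.relIndex_dvd_of_le_left T (Subgroup.le_comap_map φ S)

lemma map_adj {G H : Type*} [Group G] [Group H] (φ : G →* H)
    {S T : Subgroup G} (h : (primeIndexGraph G).Adj S T) :
    S.map φ = T.map φ ∨ (primeIndexGraph H).Adj (S.map φ) (T.map φ) := by
  rw [primeIndexGraph, SimpleGraph.fromRel_adj] at h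
  obtain ⟨-, h | h⟩ := h
  · obtain ⟨hle, hp⟩ := h
    have hd := relindex_map_dvd φ (S := S) (T := T)
    rcases (Nat.Prime.eq_one_or_self_of_dvd hp _ hd) with h1 | hp'
    · left
      exact le_antisymm (Subgroup.map_mono hle) (Subgroup.relIndex_eq_one.mp h1)
    · by_cases heq : S.map φ = T.map φ
      · exact Or.inl heq
      · right
        rw [primeIndexGraph, SimpleGraph.fromRel_adj]
        exact ⟨heq, Or.inl ⟨Subgroup.map_mono hle, hp' ▸ hp⟩⟩
  · obtain ⟨hle, hp⟩ := h
    have hd := relindex_map_dvd φ (S := T) (T := S)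
    rcases (Nat.Prime.eq_one_or_self_of_dvd hp _ hd) with h1 | hp'
    · left
      exact le_antisymm (Subgroup.relIndex_eq_one.mp h1) (Subgroup.map_mono hle)
    · by_cases heq : S.map φ = T.map φ
      · exact Or.inl heq
      · right
        rw [primeIndexGraph, SimpleGraph.fromRel_adj]
        exact ⟨heq, Or.inr ⟨Subgroup.map_mono hle, hp' ▸ hp⟩⟩

lemma reachable_of_map {V W : Type*} {G : SimpleGraph V} {G' : SimpleGraph W}
    (f : V → W) (hf : ∀ a b, G.Adj a b → f a = f b ∨ G'.Adj (f a) (f b))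
    {a b : V} (h : G.Reachable a b) : G'.Reachable (f a) (f b) := by
  obtain ⟨w⟩ := h
  induction w with
  | nil => exact SimpleGraph.Reachable.refl _
  | cons hadj _ ih =>
    rcases hf _ _ hadj with heq | hadj' 
    · rw [heq]; exact ih
    · exact (SimpleGraph.Adj.reachable hadj').trans ih

lemma connected_of_surj {G H : Type*} [Group G] [Group H] (φ : G →* H)
    (hφ : Function.Surjective φ) (h : (primeIndexGraph G).Connected) :
    (primeIndexGraph H).Connected := by
  rw [SimpleGraph.connected_iff] at h ⊢
  refine ⟨fun A B => ?_, ⟨⊥⟩⟩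
  have hA : (A.comap φ).map φ = A := Subgroup.map_comap_eq_self_of_surjective hφ A
  have hB : (B.comap φ).map φ = B := Subgroup.map_comap_eq_self_of_surjective hφ B
  have := reachable_of_map (Subgroup.map φ) (fun a b => map_adj φ)
    (h.1 (A.comap φ) (B.comap φ))
  rwa [hA, hB] at this

theorem primeIndexGraph_connected_of_prod (G H K : Type*) [Group G] [Group H]
    [Group K] (e : G ≃* H × K) (h : (primeIndexGraph G).Connected) :
    (primeIndexGraph H).Connected ∧ (primeIndexGraph K).Connected := by
  constructor
  · exact connected_of_surj ((MonoidHom.fst H K).comp e.toMonoidHom)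
      ((Prod.fst_surjective).comp e.surjective) h
  · exact connected_of_surj ((MonoidHom.snd H K).comp e.toMonoidHom)
      ((Prod.snd_surjective).comp e.surjective) h
end
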